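/- Let (μ_n) be a uniformly integrable sequence of probability measures on ℝ converging weakly to a probability measure μ_∞ whose distribution function is strictly increasing. Let τ ∈ (0,1), let q_{τ,n} be any minimizer of q ↦ ∫ ρ_τ(y - q) dμ_n(y), and let q_{τ,∞} be the unique minimizer of q ↦ ∫ ρ_τ(y - q) dμ_∞(y). Then q_{τ,n} → q_{τ,∞} as n → ∞. -/

import Mathlib

open MeasureTheory Filter

/-- The pinball loss function ρ_τ(y) = y·(τ - 1_{y ≤ 0}). -/
noncomputable def pinball (τ y : ℝ) : ℝ := y * (τ - if y ≤ 0 then 1 else 0)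

lemma pinball_eq (τ y : ℝ) : pinball τ y = τ * y + max (-y) 0 := by
  unfold pinball
  split_ifs with h
  · rw [max_eq_left (by linarith)]; ring
  · rw [max_eq_right (by linarith)]; ring

lemma abs_pinball_le {τ : ℝ} (h0 : 0 < τ) (h1 : τ < 1) (y : ℝ) : |pinball τ y| ≤ |y| := by
  unfold pinball
  rw [abs_mul]
  have h : |τ - if y ≤ 0 then 1 else 0| ≤ 1 := by
    split_ifs <;> rw [abs_le] <;> constructor <;> linarith
  nlinarith [abs_nonneg y]

lemma pinball_cont {τ : ℝ} (q : ℝ) : Continuous fun y : ℝ => pinball τ (y - q) := by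
  have : (fun y : ℝ => pinball τ (y - q)) = fun y : ℝ => τ * (y - q) + max (-(y - q)) 0 :=
    funext fun y => pinball_eq τ (y - q)
  rw [this]
  fun_prop

lemma pinball_integrable {τ : ℝ} (h0 : 0 < τ) (h1 : τ < 1) (m : Measure ℝ)
    [IsProbabilityMeasure m] (hm : Integrable (fun x : ℝ => x) m) (q : ℝ) :
    Integrable (fun y => pinball τ (y - q)) m := by
  apply Integrable.mono' (g := fun y => |y| + |q|) (hm.abs.add (integrable_const _))
    (pinball_cont q).aestronglyMeasurable
  filter_upwards with y
  calc ‖pinball τ (y - q)‖ = |pinball τ (y - q)| := rfl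
    _ ≤ |y - q| := abs_pinball_le h0 h1 _
    _ ≤ |y| + |q| := by rw [sub_eq_add_neg]; exact (abs_add_le _ _).trans (by rw [abs_neg])

lemma pinball_convex_comb (τ y a b l m : ℝ) (hl : 0 ≤ l) (hm : 0 ≤ m) (hlm : l + m = 1) :
    pinball τ (y - (l * a + m * b)) ≤ l * pinball τ (y - a) + m * pinball τ (y - b) := by
  rw [pinball_eq, pinball_eq, pinball_eq]
  have h1 := le_max_left (-(y - a)) 0
  have h2 := le_max_left (-(y - b)) 0
  have h3 := le_max_right (-(y - a)) 0
  have h4 := le_max_right (-(y - b)) 0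
  have key : max (-(y - (l * a + m * b))) 0 ≤ l * max (-(y - a)) 0 + m * max (-(y - b)) 0 := by
    apply max_le
    · have lin2 : -(y - (l * a + m * b)) = l * (-(y - a)) + m * (-(y - b)) := by
        linear_combination y * hlm
      linarith [mul_le_mul_of_nonneg_left h1 hl, mul_le_mul_of_nonneg_left h2 hm]
    · have := mul_nonneg hl h3
      have := mul_nonneg hm h4
      linarith
  have lin : τ * (y - (l * a + m * b)) = l * (τ * (y - a)) + m * (τ * (y - b)) := by
    linear_combination (-(τ * y)) * hlm
  nlinarith

lemma risk_convex_comb {τ : ℝ} (h0 : 0 < τ) (h1 : τ < 1) (m : Measure ℝ)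
    [IsProbabilityMeasure m] (hm : Integrable (fun x : ℝ => x) m)
    (a c l mm : ℝ) (hl : 0 ≤ l) (hmm : 0 ≤ mm) (hsum : l + mm = 1) :
    ∫ y, pinball τ (y - (l * a + mm * c)) ∂m ≤
      l * ∫ y, pinball τ (y - a) ∂m + mm * ∫ y, pinball τ (y - c) ∂m := by
  have ia := pinball_integrable h0 h1 m hm a
  have ic := pinball_integrable h0 h1 m hm c
  have : l * (∫ y, pinball τ (y - a) ∂m) + mm * ∫ y, pinball τ (y - c) ∂m
      = ∫ y, (l * pinball τ (y - a) + mm * pinball τ (y - c)) ∂m := by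
    rw [integral_add (ia.const_mul l) (ic.const_mul mm), integral_const_mul, integral_const_mul]
  rw [this]
  exact integral_mono (pinball_integrable h0 h1 m hm _) ((ia.const_mul l).add (ic.const_mul mm))
    (fun y => pinball_convex_comb τ y a c l mm hl hmm hsum)

lemma risk_diff_upper {τ : ℝ} (h0 : 0 < τ) (h1 : τ < 1) (m : Measure ℝ)
    [IsProbabilityMeasure m] (hm : Integrable (fun x : ℝ => x) m) {a b : ℝ} (hab : a ≤ b) :
    (∫ y, pinball τ (y - b) ∂m) - ∫ y, pinball τ (y - a) ∂m
      ≤ (b - a) * ((m (Set.Iic b)).toReal - τ) := by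
  rw [← integral_sub (pinball_integrable h0 h1 m hm b) (pinball_integrable h0 h1 m hm a)]
  have hind : Integrable (fun y : ℝ => (b - a) * Set.indicator (Set.Iic b) (fun _ => (1:ℝ)) y
      - τ * (b - a)) m := by
    exact (((integrable_const (1:ℝ)).indicator measurableSet_Iic).const_mul _).sub (integrable_const _)
  have hmono : ∀ y, pinball τ (y - b) - pinball τ (y - a)
      ≤ (b - a) * Set.indicator (Set.Iic b) (fun _ => (1:ℝ)) y - τ * (b - a) := by
    intro y
    rw [pinball_eq, pinball_eq, Set.indicator_apply]
    by_cases hy : y ∈ Set.Iic b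
    · simp only [hy, if_pos]
      simp only [Set.mem_Iic] at hy
      have e1 : max (-(y - b)) 0 = -(y - b) := max_eq_left (by linarith)
      have h3 := le_max_left (-(y - a)) 0
      have h4 := le_max_right (-(y - a)) 0
      rw [e1]; nlinarith
    · simp only [hy, if_neg, not_false_iff]
      simp only [Set.mem_Iic, not_le] at hy
      have e1 : max (-(y - b)) 0 = 0 := max_eq_right (by linarith)
      have h4 := le_max_right (-(y - a)) 0
      rw [e1]; nlinarith
  calc ∫ y, (pinball τ (y - b) - pinball τ (y - a)) ∂m
      ≤ ∫ y, ((b - a) * Set.indicator (Set.Iic b) (fun _ => (1:ℝ)) y - τ * (b - a)) ∂m :=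
        integral_mono ((pinball_integrable h0 h1 m hm b).sub (pinball_integrable h0 h1 m hm a))
          hind hmono
    _ = (b - a) * ((m (Set.Iic b)).toReal - τ) := by
        rw [integral_sub (((integrable_const (1:ℝ)).indicator measurableSet_Iic).const_mul _)
          (integrable_const _), integral_const_mul, integral_indicator measurableSet_Iic]
        simp [measure_univ, Measure.real]
        ring

lemma risk_diff_lower {τ : ℝ} (h0 : 0 < τ) (h1 : τ < 1) (m : Measure ℝ)
    [IsProbabilityMeasure m] (hm : Integrable (fun x : ℝ => x) m) {a b : ℝ} (hab : a ≤ b) :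
    (b - a) * ((m (Set.Iic a)).toReal - τ)
      ≤ (∫ y, pinball τ (y - b) ∂m) - ∫ y, pinball τ (y - a) ∂m := by
  rw [← integral_sub (pinball_integrable h0 h1 m hm b) (pinball_integrable h0 h1 m hm a)]
  have hind : Integrable (fun y : ℝ => (b - a) * Set.indicator (Set.Iic a) (fun _ => (1:ℝ)) y
      - τ * (b - a)) m := by
    exact (((integrable_const (1:ℝ)).indicator measurableSet_Iic).const_mul _).sub (integrable_const _)
  have hmono : ∀ y, (b - a) * Set.indicator (Set.Iic a) (fun _ => (1:ℝ)) y - τ * (b - a)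
      ≤ pinball τ (y - b) - pinball τ (y - a) := by
    intro y
    rw [pinball_eq, pinball_eq, Set.indicator_apply]
    by_cases hy : y ∈ Set.Iic a
    · simp only [hy, if_pos]
      simp only [Set.mem_Iic] at hy
      have e1 : max (-(y - b)) 0 = -(y - b) := max_eq_left (by linarith)
      have e2 : max (-(y - a)) 0 = -(y - a) := max_eq_left (by linarith)
      rw [e1, e2]; nlinarith
    · simp only [hy, if_neg, not_false_iff]
      have e3 : max (-(y - a)) 0 ≤ max (-(y - b)) 0 :=
        max_le_max (by linarith) le_rfl
      nlinarith
  calc (b - a) * ((m (Set.Iic a)).toReal - τ)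
      = ∫ y, ((b - a) * Set.indicator (Set.Iic a) (fun _ => (1:ℝ)) y - τ * (b - a)) ∂m := by
        rw [integral_sub (((integrable_const (1:ℝ)).indicator measurableSet_Iic).const_mul _)
          (integrable_const _), integral_const_mul, integral_indicator measurableSet_Iic]
        simp [measure_univ, Measure.real]
        ring
    _ ≤ ∫ y, (pinball τ (y - b) - pinball τ (y - a)) ∂m :=
        integral_mono hind
          ((pinball_integrable h0 h1 m hm b).sub (pinball_integrable h0 h1 m hm a)) hmono

lemma clamp_abs_le {M : ℝ} (hM : 0 ≤ M) (x : ℝ) : |x - max (-M) (min M x)| ≤ |x| := by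
  rcases le_total x (-M) with h1 | h1
  · rw [min_eq_right (h1.trans (by linarith)), max_eq_left h1]
    rw [abs_of_nonpos (by linarith), abs_of_nonpos (by linarith)]; linarith
  · rcases le_total x M with h2 | h2
    · rw [min_eq_right h2, max_eq_right h1]; simp
    · rw [min_eq_left h2, max_eq_right (by linarith)]
      rw [abs_of_nonneg (by linarith), abs_of_nonneg (by linarith)]; linarith

lemma trunc_est {τ : ℝ} (h0 : 0 < τ) (h1 : τ < 1) (q α : ℝ) (hαq : |q| ≤ α)
    (m : Measure ℝ) [IsProbabilityMeasure m] (hm : Integrable (fun x : ℝ => x) m) :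
    |(∫ y, pinball τ (y - q) ∂m)
        - ∫ y, max (-(α + |q|)) (min (α + |q|) (pinball τ (y - q))) ∂m|
      ≤ 2 * ∫ y in {y : ℝ | α ≤ |y|}, |y| ∂m := by
  have hα0 : 0 ≤ α := (abs_nonneg q).trans hαq
  have hM : 0 ≤ α + |q| := by positivity
  set M := α + |q| with hMdef
  set f : ℝ → ℝ := fun y => pinball τ (y - q) with hf
  set fM : ℝ → ℝ := fun y => max (-M) (min M (f y)) with hfM
  have hs : MeasurableSet {y : ℝ | α ≤ |y|} :=
    measurableSet_le measurable_const measurable_abs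
  have hfint : Integrable f m := pinball_integrable h0 h1 m hm q
  have hfMcont : Continuous fM := continuous_const.max (continuous_const.min (pinball_cont q))
  have hfMbdd : ∀ x, ‖fM x‖ ≤ M := by
    intro x
    rw [Real.norm_eq_abs, abs_le]
    exact ⟨le_max_left _ _, max_le (by linarith) ((min_le_left _ _))⟩
  have hfMint : Integrable fM m :=
    Integrable.mono' (integrable_const M) hfMcont.aestronglyMeasurable
      (Filter.Eventually.of_forall hfMbdd)
  have hbound : ∀ y, |f y - fM y| ≤ Set.indicator {y : ℝ | α ≤ |y|} (fun y => 2 * |y|) y := by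
    intro y
    rw [Set.indicator_apply]
    by_cases hy : y ∈ {y : ℝ | α ≤ |y|}
    · rw [if_pos hy]
      have hy' : α ≤ |y| := hy
      calc |f y - fM y| ≤ |f y| := clamp_abs_le hM _
        _ ≤ |y - q| := abs_pinball_le h0 h1 _
        _ ≤ |y| + |q| := by
            rw [sub_eq_add_neg]; exact (abs_add_le _ _).trans (by rw [abs_neg])
        _ ≤ 2 * |y| := by linarith [hαq.trans hy']
    · rw [if_neg hy]
      simp only [Set.mem_setOf_eq, not_le] at hy
      have habs : |f y| ≤ M := by
        calc |f y| ≤ |y - q| := abs_pinball_le h0 h1 _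
          _ ≤ |y| + |q| := by
              rw [sub_eq_add_neg]; exact (abs_add_le _ _).trans (by rw [abs_neg])
          _ ≤ M := by rw [hMdef]; linarith
      rw [abs_le] at habs
      have : fM y = f y := by
        rw [hfM]; dsimp only
        rw [min_eq_right habs.2, max_eq_right habs.1]
      rw [this, sub_self, abs_zero]
  rw [← integral_sub hfint hfMint]
  calc |∫ y, (f y - fM y) ∂m| ≤ ∫ y, |f y - fM y| ∂m :=
        by simpa [Real.norm_eq_abs] using norm_integral_le_integral_norm (μ := m) (fun y => f y - fM y)
    _ ≤ ∫ y, Set.indicator {y : ℝ | α ≤ |y|} (fun y => 2 * |y|) y ∂m :=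
        integral_mono (hfint.sub hfMint).abs ((hm.abs.const_mul 2).indicator hs)
          hbound
    _ = 2 * ∫ y in {y : ℝ | α ≤ |y|}, |y| ∂m := by
        rw [integral_indicator hs, integral_const_mul]

lemma tail_tendsto (ν : Measure ℝ) [IsProbabilityMeasure ν]
    (hintν : Integrable (fun x : ℝ => x) ν) :
    Tendsto (fun k : ℕ => ∫ y in {y : ℝ | (k : ℝ) ≤ |y|}, |y| ∂ν) atTop (nhds 0) := by
  have hs : ∀ k : ℕ, MeasurableSet {y : ℝ | (k : ℝ) ≤ |y|} := fun k =>
    measurableSet_le measurable_const measurable_abs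
  have heq : ∀ k : ℕ, (∫ y in {y : ℝ | (k : ℝ) ≤ |y|}, |y| ∂ν)
      = ∫ y, Set.indicator {y : ℝ | (k : ℝ) ≤ |y|} (fun y => |y|) y ∂ν := fun k =>
    (integral_indicator (hs k)).symm
  simp only [heq]
  have h0 : (0 : ℝ) = ∫ y, (0 : ℝ) ∂ν := by simp
  rw [h0]
  apply tendsto_integral_of_dominated_convergence (fun y => |y|)
  · exact fun k => (measurable_abs.aestronglyMeasurable).indicator (hs k)
  · exact hintν.abs
  · intro k
    filter_upwards with y
    rw [Real.norm_eq_abs]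
    rw [Set.indicator_apply]
    split_ifs
    · rw [abs_abs]
    · simp [abs_nonneg]
  · filter_upwards with y
    apply Tendsto.congr' _ tendsto_const_nhds
    filter_upwards [eventually_ge_atTop (⌈|y|⌉₊ + 1)] with k hk
    rw [Set.indicator_apply, if_neg]
    simp only [Set.mem_setOf_eq, not_le]
    calc |y| ≤ (⌈|y|⌉₊ : ℝ) := Nat.le_ceil _
      _ < (k : ℝ) := by exact_mod_cast Nat.lt_of_lt_of_le (Nat.lt_succ_self _) hk

lemma risk_tendsto {τ : ℝ} (h0 : 0 < τ) (h1 : τ < 1)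
    (μ : ℕ → Measure ℝ) [∀ n, IsProbabilityMeasure (μ n)]
    (ν : Measure ℝ) [IsProbabilityMeasure ν]
    (hint : ∀ n, Integrable (fun x : ℝ => x) (μ n))
    (hintν : Integrable (fun x : ℝ => x) ν)
    (hUI : ∀ δ > 0, ∃ α : ℝ, ∀ n, ∫ x in {x : ℝ | α ≤ |x|}, |x| ∂(μ n) < δ)
    (hweak : ∀ f : ℝ → ℝ, Continuous f → (∃ C, ∀ x, |f x| ≤ C) →
      Tendsto (fun n => ∫ x, f x ∂(μ n)) atTop (nhds (∫ x, f x ∂ν)))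
    (q : ℝ) :
    Tendsto (fun n => ∫ y, pinball τ (y - q) ∂(μ n)) atTop
      (nhds (∫ y, pinball τ (y - q) ∂ν)) := by
  rw [Metric.tendsto_atTop]
  intro ε hε
  set δ := ε / 6 with hδdef
  have hδ0 : 0 < δ := by positivity
  obtain ⟨α₀, hα₀⟩ := hUI δ hδ0
  have htail := tail_tendsto ν hintν
  have htail' : ∀ᶠ k : ℕ in atTop, (∫ y in {y : ℝ | (k : ℝ) ≤ |y|}, |y| ∂ν) < δ := by
    have := htail.eventually (eventually_lt_nhds hδ0)
    simpa using this
  obtain ⟨k₀, hk₀⟩ := htail'.exists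
  set α := max α₀ (max (k₀ : ℝ) |q|) with hαdef
  have hαq : |q| ≤ α := le_max_of_le_right (le_max_right _ _)
  have hsub : ∀ β : ℝ, β ≤ α → {y : ℝ | α ≤ |y|} ⊆ {y : ℝ | β ≤ |y|} := by
    intro β hβ y hy
    exact le_trans hβ hy
  have hmonoset : ∀ (m : Measure ℝ), Integrable (fun x : ℝ => x) m → ∀ β : ℝ, β ≤ α →
      (∫ y in {y : ℝ | α ≤ |y|}, |y| ∂m) ≤ ∫ y in {y : ℝ | β ≤ |y|}, |y| ∂m := by
    intro m hm β hβ
    apply setIntegral_mono_set hm.abs.integrableOn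
      (Filter.Eventually.of_forall fun y => abs_nonneg y)
      (Filter.Eventually.of_forall (hsub β hβ))
  have tailμ : ∀ n, (∫ y in {y : ℝ | α ≤ |y|}, |y| ∂(μ n)) < δ := fun n =>
    lt_of_le_of_lt (hmonoset _ (hint n) α₀ (le_max_left _ _)) (hα₀ n)
  have tailν : (∫ y in {y : ℝ | α ≤ |y|}, |y| ∂ν) < δ :=
    lt_of_le_of_lt (hmonoset _ hintν (k₀ : ℝ) (le_max_of_le_right (le_max_left _ _))) hk₀
  set M := α + |q| with hMdef
  set fM : ℝ → ℝ := fun y => max (-M) (min M (pinball τ (y - q))) with hfMdef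
  have hfMcont : Continuous fM := continuous_const.max (continuous_const.min (pinball_cont q))
  have hfMbdd : ∃ C, ∀ x, |fM x| ≤ C := by
    refine ⟨M, fun x => ?_⟩
    have hM : 0 ≤ M := by positivity
    rw [abs_le]
    exact ⟨le_max_left _ _, max_le (by linarith) ((min_le_left _ _))⟩
  have hconv := hweak fM hfMcont hfMbdd
  rw [Metric.tendsto_atTop] at hconv
  obtain ⟨N, hN⟩ := hconv δ hδ0
  refine ⟨N, fun n hn => ?_⟩
  have e1 := trunc_est h0 h1 q α hαq (μ n) (hint n)
  have e2 := trunc_est h0 h1 q α hαq ν hintν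
  have e3 := hN n hn
  rw [Real.dist_eq] at e3 ⊢
  have b1 : |(∫ y, pinball τ (y - q) ∂(μ n)) - ∫ y, fM y ∂(μ n)| ≤ 2 * δ :=
    e1.trans (by linarith [tailμ n])
  have b2 : |(∫ y, pinball τ (y - q) ∂ν) - ∫ y, fM y ∂ν| ≤ 2 * δ :=
    e2.trans (by linarith [tailν])
  have tri := abs_sub_le (∫ y, pinball τ (y - q) ∂(μ n)) (∫ y, fM y ∂(μ n))
    (∫ y, pinball τ (y - q) ∂ν)
  have tri2 := abs_sub_le (∫ y, fM y ∂(μ n)) (∫ y, fM y ∂ν) (∫ y, pinball τ (y - q) ∂ν)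
  have comm : |(∫ y, fM y ∂ν) - ∫ y, pinball τ (y - q) ∂ν|
      = |(∫ y, pinball τ (y - q) ∂ν) - ∫ y, fM y ∂ν| := abs_sub_comm _ _
  linarith

lemma two_minimizers {τ : ℝ} (h0 : 0 < τ) (h1 : τ < 1) (ν : Measure ℝ)
    [IsProbabilityMeasure ν] (hintν : Integrable (fun x : ℝ => x) ν)
    (hmono : StrictMono (fun t => (ν (Set.Iic t)).toReal))
    {u v : ℝ} (huv : u < v)
    (hu : ∀ r, (∫ y, pinball τ (y - u) ∂ν) ≤ ∫ y, pinball τ (y - r) ∂ν)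
    (hv : ∀ r, (∫ y, pinball τ (y - v) ∂ν) ≤ ∫ y, pinball τ (y - r) ∂ν) : False := by
  set t1 := u + (v - u) / 3 with ht1
  set t2 := u + 2 * (v - u) / 3 with ht2
  have hu1 : u < t1 := by rw [ht1]; linarith
  have h12 : t1 < t2 := by rw [ht1, ht2]; linarith
  have h2v : t2 < v := by rw [ht2]; linarith
  have A := risk_diff_upper h0 h1 ν hintν hu1.le
  have A' : 0 ≤ (∫ y, pinball τ (y - t1) ∂ν) - ∫ y, pinball τ (y - u) ∂ν :=
    sub_nonneg.2 (hu t1)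
  have hFt1 : τ ≤ (ν (Set.Iic t1)).toReal := by nlinarith
  have B := risk_diff_lower h0 h1 ν hintν h2v.le
  have B' : (∫ y, pinball τ (y - v) ∂ν) - ∫ y, pinball τ (y - t2) ∂ν ≤ 0 :=
    sub_nonpos.2 (hv t2)
  have hFt2 : (ν (Set.Iic t2)).toReal ≤ τ := by nlinarith
  have := hmono h12
  simp only at this
  linarith

lemma risk_unique_min {τ : ℝ} (h0 : 0 < τ) (h1 : τ < 1) (ν : Measure ℝ)
    [IsProbabilityMeasure ν] (hintν : Integrable (fun x : ℝ => x) ν)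
    (hmono : StrictMono (fun t => (ν (Set.Iic t)).toReal))
    (qlim : ℝ)
    (hqν : ∀ q : ℝ, (∫ y, pinball τ (y - qlim) ∂ν) ≤ ∫ y, pinball τ (y - q) ∂ν)
    (q : ℝ) (hq : q ≠ qlim) :
    (∫ y, pinball τ (y - qlim) ∂ν) < ∫ y, pinball τ (y - q) ∂ν := by
  rcases lt_or_ge (∫ y, pinball τ (y - qlim) ∂ν) (∫ y, pinball τ (y - q) ∂ν) with h | h
  · exact h
  exfalso
  have hq' : ∀ r, (∫ y, pinball τ (y - q) ∂ν) ≤ ∫ y, pinball τ (y - r) ∂ν := by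
    intro r
    exact h.trans (hqν r)
  rcases (Ne.lt_or_gt hq) with hlt | hgt
  · exact two_minimizers h0 h1 ν hintν hmono hlt hq' hqν
  · exact two_minimizers h0 h1 ν hintν hmono hgt hqν hq'

theorem quantile_minimizers_converge
    (μ : ℕ → Measure ℝ) [∀ n, IsProbabilityMeasure (μ n)]
    (ν : Measure ℝ) [IsProbabilityMeasure ν]
    (hint : ∀ n, Integrable (fun x : ℝ => x) (μ n))
    (hintν : Integrable (fun x : ℝ => x) ν)
    (hUI : ∀ δ > 0, ∃ α : ℝ, ∀ n, ∫ x in {x : ℝ | α ≤ |x|}, |x| ∂(μ n) < δ)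
    (hweak : ∀ f : ℝ → ℝ, Continuous f → (∃ C, ∀ x, |f x| ≤ C) →
      Tendsto (fun n => ∫ x, f x ∂(μ n)) atTop (nhds (∫ x, f x ∂ν)))
    (hmono : StrictMono (fun t => (ν (Set.Iic t)).toReal))
    (τ : ℝ) (hτ : τ ∈ Set.Ioo (0:ℝ) 1)
    (qn : ℕ → ℝ)
    (hqn : ∀ n, ∀ q : ℝ, ∫ y, pinball τ (y - qn n) ∂(μ n) ≤ ∫ y, pinball τ (y - q) ∂(μ n))
    (qlim : ℝ)
    (hqν : ∀ q : ℝ, ∫ y, pinball τ (y - qlim) ∂ν ≤ ∫ y, pinball τ (y - q) ∂ν) :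
    Tendsto qn atTop (nhds qlim) := by
  obtain ⟨hτ0, hτ1⟩ := hτ
  rw [Metric.tendsto_atTop]
  intro ε hε
  have hLa := risk_unique_min hτ0 hτ1 ν hintν hmono qlim hqν (qlim - ε) (by intro h; linarith [congrArg id h])
  have hLb := risk_unique_min hτ0 hτ1 ν hintν hmono qlim hqν (qlim + ε) (by intro h; linarith [congrArg id h])
  have ta := risk_tendsto hτ0 hτ1 μ ν hint hintν hUI hweak (qlim - ε)
  have tb := risk_tendsto hτ0 hτ1 μ ν hint hintν hUI hweak (qlim + ε)
  have tl := risk_tendsto hτ0 hτ1 μ ν hint hintν hUI hweak qlim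
  have eva : ∀ᶠ n in atTop, (∫ y, pinball τ (y - qlim) ∂(μ n))
      < ∫ y, pinball τ (y - (qlim - ε)) ∂(μ n) := tl.eventually_lt ta hLa
  have evb : ∀ᶠ n in atTop, (∫ y, pinball τ (y - qlim) ∂(μ n))
      < ∫ y, pinball τ (y - (qlim + ε)) ∂(μ n) := tl.eventually_lt tb hLb
  obtain ⟨N, hN⟩ := eventually_atTop.mp (eva.and evb)
  refine ⟨N, fun n hn => ?_⟩
  obtain ⟨h1n, h2n⟩ := hN n hn
  rw [Real.dist_eq, abs_lt]
  constructor
  · by_contra hcon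
    push_neg at hcon
    have hd : 0 < qlim - qn n := by linarith
    set mm := ε / (qlim - qn n) with hmm
    have hmm0 : 0 ≤ mm := by positivity
    have hmm1 : mm ≤ 1 := by rw [hmm, div_le_one hd]; linarith
    have hsum : (1 - mm) + mm = 1 := by ring
    have hcomb : (1 - mm) * qlim + mm * (qn n) = qlim - ε := by
      have : mm * (qlim - qn n) = ε := by
        rw [hmm]; field_simp
      nlinarith [this]
    have hc := risk_convex_comb hτ0 hτ1 (μ n) (hint n) qlim (qn n) (1 - mm) mm
      (by linarith) hmm0 hsum
    rw [hcomb] at hc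
    have hminn := hqn n qlim
    nlinarith [mul_nonneg hmm0 (sub_nonneg.2 hminn)]
  · by_contra hcon
    push_neg at hcon
    have hd : 0 < qn n - qlim := by linarith
    set mm := ε / (qn n - qlim) with hmm
    have hmm0 : 0 ≤ mm := by positivity
    have hmm1 : mm ≤ 1 := by rw [hmm, div_le_one hd]; linarith
    have hsum : (1 - mm) + mm = 1 := by ring
    have hcomb : (1 - mm) * qlim + mm * (qn n) = qlim + ε := by
      have : mm * (qn n - qlim) = ε := by
        rw [hmm]; field_simp
      nlinarith [this]
    have hc := risk_convex_comb hτ0 hτ1 (μ n) (hint n) qlim (qn n) (1 - mm) mm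
      (by linarith) hmm0 hsum
    rw [hcomb] at hc
    have hminn := hqn n qlim
    nlinarith [mul_nonneg hmm0 (sub_nonneg.2 hminn)]
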